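/- arXiv:1002.1104 — 2 statements merged into one kernel-verified Lean document; each statement's English description precedes it below -/
import Mathlib

section
/- In the mixed random dataset model, let X ≠ Y be k-element itemsets with g = |X ∩ Y| ≥ 1 and let 1 ≤ s ≤ t. Then E[Z_X Z_Y] ≤ Σ_{i=0}^{s} t^{2s−i} · (E[R^{2s}])^{k − ig/(2s)}. -/
open MeasureTheory ProbabilityTheory Finset Filter Asymptotics

noncomputable section

namespace PaperModel

variable {Ω : Type*}

/-- Support of itemset `X` in the dataset given by the Bernoulli family `A`. -/
def support {n t : ℕ} (A : Fin t → Fin n → Ω → Bool) (X : Finset (Fin n)) (ω : Ω) : ℕ :=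
  (Finset.univ.filter fun j => ∀ i ∈ X, A j i ω = true).card

/-- Indicator `Z_X` of the event that the support of `X` is at least `s`. -/
def Z {n t : ℕ} (A : Fin t → Fin n → Ω → Bool) (s : ℕ) (X : Finset (Fin n)) (ω : Ω) : ℝ :=
  if s ≤ support A X ω then 1 else 0

/-- `Q̂_{k,s}`: the number of `k`-itemsets with support at least `s`. -/
def Qhat {n t : ℕ} (A : Fin t → Fin n → Ω → Bool) (k s : ℕ) (ω : Ω) : ℕ :=
  ((Finset.univ.powersetCard k).filter fun X => s ≤ support A X ω).card

/-- `p_X = Pr(Z_X = 1)`. -/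
def pX [MeasurableSpace Ω] (μ : Measure Ω) {n t : ℕ} (A : Fin t → Fin n → Ω → Bool)
    (s : ℕ) (X : Finset (Fin n)) : ℝ :=
  (μ {ω | s ≤ support A X ω}).toReal

/-- `E[Z_X Z_Y] = Pr(Z_X = 1 ∧ Z_Y = 1)`. -/
def pXY [MeasurableSpace Ω] (μ : Measure Ω) {n t : ℕ} (A : Fin t → Fin n → Ω → Bool)
    (s : ℕ) (X Y : Finset (Fin n)) : ℝ :=
  (μ ({ω | s ≤ support A X ω} ∩ {ω | s ≤ support A Y ω})).toReal

/-- `b_1(s) = Σ_{|X|=k} Σ_{Y ∈ I(X)} p_X p_Y`. -/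
def b1 [MeasurableSpace Ω] (μ : Measure Ω) {n t : ℕ} (A : Fin t → Fin n → Ω → Bool)
    (k s : ℕ) : ℝ :=
  ∑ X ∈ Finset.univ.powersetCard k,
    ∑ Y ∈ (Finset.univ.powersetCard k).filter (fun Y => Y ∩ X ≠ ∅),
      pX μ A s X * pX μ A s Y

/-- `b_2(s) = Σ_{|X|=k} Σ_{X ≠ Y ∈ I(X)} E[Z_X Z_Y]`. -/
def b2 [MeasurableSpace Ω] (μ : Measure Ω) {n t : ℕ} (A : Fin t → Fin n → Ω → Bool)
    (k s : ℕ) : ℝ :=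
  ∑ X ∈ Finset.univ.powersetCard k,
    ∑ Y ∈ (Finset.univ.powersetCard k).filter (fun Y => Y ∩ X ≠ ∅ ∧ Y ≠ X),
      pXY μ A s X Y

/-- Probability that a Poisson random variable with mean `lam` lands in `S ⊆ ℕ`. -/
def poissonProb (lam : ℝ) (S : Set ℕ) : ℝ :=
  ∑' j : S, Real.exp (-lam) * lam ^ (j : ℕ) / (Nat.factorial (j : ℕ) : ℝ)
/-- `m`-th moment `E[R^m]` of a distribution `ρ` on `ℝ`. -/
def moment (ρ : Measure ℝ) (m : ℕ) : ℝ := ∫ x, x ^ m ∂ρ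

/-- The σ-algebra generated by the random frequencies `R_1, …, R_n`. -/
def sigmaR [MeasurableSpace Ω] {n : ℕ} (R : Fin n → Ω → ℝ) : MeasurableSpace Ω :=
  MeasurableSpace.comap (fun ω (i : Fin n) => R i ω) inferInstance

/-- **The mixed random dataset model**: `R_1, …, R_n` are i.i.d. with distribution `ρ`
(taking values in `[0,1]`), and, conditioned on `(R_1, …, R_n)`, the entries `A j i` are
conditionally independent Bernoulli random variables with `Pr(A j i = 1 | R) = R i`.
The last clause expresses this conditional structure by giving the joint law of
`(R_1, …, R_n)` and any outcome pattern `b` of the table `A`. -/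
def MixedModel [MeasurableSpace Ω] (μ : Measure Ω) {n t : ℕ}
    (R : Fin n → Ω → ℝ) (A : Fin t → Fin n → Ω → Bool) (ρ : Measure ℝ) : Prop :=
  (∀ i, Measurable (R i)) ∧
  (∀ j i, Measurable (A j i)) ∧
  (∀ i ω, R i ω ∈ Set.Icc (0 : ℝ) 1) ∧
  iIndepFun R μ ∧
  (∀ i, μ.map (R i) = ρ) ∧
  (∀ b : Fin t → Fin n → Bool, ∀ B : Set (Fin n → ℝ), MeasurableSet B →
    μ ({ω | (fun i => R i ω) ∈ B} ∩ {ω | ∀ j i, A j i ω = b j i})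
      = ∫⁻ ω in {ω | (fun i => R i ω) ∈ B},
          ∏ j, ∏ i, ENNReal.ofReal (if b j i then R i ω else 1 - R i ω) ∂μ)
open scoped ENNReal

lemma sum_pi_bool_filter {ι : Type*} [Fintype ι] [DecidableEq ι]
    (f : ι → Bool → ℝ≥0∞) (hf : ∀ p, f p true + f p false = 1) (C : Finset ι) :
    ∑ b ∈ Finset.univ.filter (fun b : ι → Bool => ∀ p ∈ C, b p = true),
      ∏ p, f p (b p) = ∏ p ∈ C, f p true := by
  classical
  rw [Finset.sum_filter]
  have h1 : ∀ b : ι → Bool,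
      (if ∀ p ∈ C, b p = true then ∏ p, f p (b p) else 0)
        = ∏ p, (if p ∈ C then (if b p then f p true else 0) else f p (b p)) := by
    intro b
    by_cases hb : ∀ p ∈ C, b p = true
    · rw [if_pos hb]
      refine Finset.prod_congr rfl fun p _ => ?_
      by_cases hp : p ∈ C
      · simp [hp, hb p hp]
      · simp [hp]
    · rw [if_neg hb]
      push_neg at hb
      obtain ⟨p, hpC, hbp⟩ := hb
      refine (Finset.prod_eq_zero (Finset.mem_univ p) ?_).symm
      simp [hpC, hbp]
  simp only [h1]
  have h2 : (∑ b : ι → Bool, ∏ p,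
      (if p ∈ C then (if b p then f p true else 0) else f p (b p)))
      = ∏ p, ∑ v : Bool, (if p ∈ C then (if v then f p true else 0) else f p v) := by
    rw [Finset.prod_univ_sum]
    rw [Fintype.piFinset_univ]
  rw [h2]
  have h3 : ∀ p : ι, (∑ v : Bool, (if p ∈ C then (if v then f p true else 0) else f p v))
      = if p ∈ C then f p true else 1 := by
    intro p
    rw [Fintype.sum_bool]
    by_cases hp : p ∈ C <;> simp [hp, hf p]
  simp only [h3]
  rw [Finset.prod_ite_mem, Finset.univ_inter]

lemma count_pairs (t s m : ℕ) (hm : m ≤ s) :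
    ((((Finset.univ.powersetCard s : Finset (Finset (Fin t))) ×ˢ
        (Finset.univ.powersetCard s : Finset (Finset (Fin t)))).filter
      (fun p => (p.1 ∩ p.2).card = m)).card) ≤ t ^ (2 * s - m) := by
  classical
  set Q := ((Finset.univ.powersetCard m : Finset (Finset (Fin t))) ×ˢ
    ((Finset.univ.powersetCard (s - m) : Finset (Finset (Fin t))) ×ˢ
      (Finset.univ.powersetCard (s - m) : Finset (Finset (Fin t))))) with hQ
  have hinj : ∀ p ∈ (((Finset.univ.powersetCard s : Finset (Finset (Fin t))) ×ˢ
        (Finset.univ.powersetCard s : Finset (Finset (Fin t)))).filter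
      (fun p => (p.1 ∩ p.2).card = m)),
      (p.1 ∩ p.2, (p.1 \ p.2, p.2 \ p.1)) ∈ Q := by
    rintro ⟨S, T⟩ hp
    simp only [Finset.mem_filter, Finset.mem_product, mem_powersetCard_univ] at hp
    obtain ⟨⟨hS, hT⟩, hST⟩ := hp
    have h1 := Finset.card_inter_add_card_sdiff S T
    have h2 := Finset.card_inter_add_card_sdiff T S
    rw [Finset.inter_comm T S] at h2
    simp only [hQ, Finset.mem_product, mem_powersetCard_univ]
    exact ⟨hST, by omega, by omega⟩
  have hcard := Finset.card_le_card_of_injOn _ hinj (by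
    rintro ⟨S, T⟩ _ ⟨S', T'⟩ _ h
    simp only [Prod.mk.injEq] at h
    obtain ⟨h1, h2, h3⟩ := h
    have hS : S = S' := by
      rw [← Finset.sdiff_union_inter S T, ← Finset.sdiff_union_inter S' T', h1, h2]
    have hT : T = T' := by
      rw [← Finset.sdiff_union_inter T S, ← Finset.sdiff_union_inter T' S', h3,
        Finset.inter_comm T S, Finset.inter_comm T' S', h1]
    exact Prod.ext hS hT)
  refine hcard.trans ?_
  have : Q.card = (Nat.choose t m) * ((Nat.choose t (s-m)) * (Nat.choose t (s-m))) := by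
    simp [hQ, Finset.card_product, Finset.card_powersetCard]
  rw [this]
  calc Nat.choose t m * (Nat.choose t (s-m) * Nat.choose t (s-m))
      ≤ t ^ m * (t ^ (s-m) * t ^ (s-m)) := by
        exact Nat.mul_le_mul (Nat.choose_le_pow t m)
          (Nat.mul_le_mul (Nat.choose_le_pow t (s-m)) (Nat.choose_le_pow t (s-m)))
    _ = t ^ (2 * s - m) := by
        rw [← pow_add, ← pow_add]
        congr 1
        omega

set_option maxHeartbeats 1000000 in
lemma measure_allTrue {Ω : Type*} [MeasurableSpace Ω] (μ : Measure Ω) [IsProbabilityMeasure μ]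
    {n t : ℕ}
    (R : Fin n → Ω → ℝ) (A : Fin t → Fin n → Ω → Bool)
    (hR : ∀ i, Measurable (R i)) (hA : ∀ j i, Measurable (A j i))
    (hI : ∀ i ω, R i ω ∈ Set.Icc (0:ℝ) 1)
    (hlaw : ∀ b : Fin t → Fin n → Bool, ∀ B : Set (Fin n → ℝ), MeasurableSet B →
      μ ({ω | (fun i => R i ω) ∈ B} ∩ {ω | ∀ j i, A j i ω = b j i})
        = ∫⁻ ω in {ω | (fun i => R i ω) ∈ B},
            ∏ j, ∏ i, ENNReal.ofReal (if b j i then R i ω else 1 - R i ω) ∂μ)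
    (C : Finset (Fin t × Fin n)) :
    μ {ω | ∀ p ∈ C, A p.1 p.2 ω = true}
      = ∫⁻ ω, ∏ p ∈ C, ENNReal.ofReal (R p.2 ω) ∂μ := by
  classical
  set SC : Finset (Fin t → Fin n → Bool) :=
    Finset.univ.filter (fun b => ∀ p ∈ C, b p.1 p.2 = true) with hSC
  have hEmeas : ∀ b : Fin t → Fin n → Bool,
      MeasurableSet {ω | ∀ j i, A j i ω = b j i} := by
    intro b
    have : {ω | ∀ j i, A j i ω = b j i} = ⋂ j, ⋂ i, (A j i) ⁻¹' {b j i} := by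
      ext ω; simp [Set.mem_iInter, Set.mem_preimage]
    rw [this]
    exact MeasurableSet.iInter fun j => MeasurableSet.iInter fun i =>
      hA j i (measurableSet_singleton _)
  have hunion : {ω | ∀ p ∈ C, A p.1 p.2 ω = true}
      = ⋃ b ∈ SC, {ω | ∀ j i, A j i ω = b j i} := by
    ext ω
    simp only [Set.mem_setOf_eq, Set.mem_iUnion, hSC, Finset.mem_filter, Finset.mem_univ,
      true_and]
    constructor
    · intro h
      exact ⟨fun j i => A j i ω, fun p hp => h p hp, fun j i => rfl⟩
    · rintro ⟨b, hb, hab⟩ p hp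
      rw [hab p.1 p.2]; exact hb p hp
  have hdisj : (SC : Set (Fin t → Fin n → Bool)).PairwiseDisjoint
      (fun b => {ω | ∀ j i, A j i ω = b j i}) := by
    intro b _ b' _ hbb'
    refine Set.disjoint_left.2 fun ω hω hω' => hbb' ?_
    funext j i
    rw [← hω j i, ← hω' j i]
  have hW : ∀ b : Fin t → Fin n → Bool, Measurable fun ω =>
      ∏ j, ∏ i, ENNReal.ofReal (if b j i then R i ω else 1 - R i ω) := by
    intro b
    refine Finset.measurable_prod _ fun j _ => Finset.measurable_prod _ fun i _ => ?_
    cases hb : b j i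
    · simpa [hb] using (Measurable.ennreal_ofReal (measurable_const.sub (hR i)))
    · simpa [hb] using (Measurable.ennreal_ofReal (hR i))
  calc μ {ω | ∀ p ∈ C, A p.1 p.2 ω = true}
      = ∑ b ∈ SC, μ {ω | ∀ j i, A j i ω = b j i} := by
        rw [hunion, measure_biUnion_finset hdisj fun b _ => hEmeas b]
    _ = ∑ b ∈ SC, ∫⁻ ω, ∏ j, ∏ i,
          ENNReal.ofReal (if b j i then R i ω else 1 - R i ω) ∂μ := by
        refine Finset.sum_congr rfl fun b _ => ?_
        have := hlaw b Set.univ MeasurableSet.univ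
        simpa using this
    _ = ∫⁻ ω, ∑ b ∈ SC, ∏ j, ∏ i,
          ENNReal.ofReal (if b j i then R i ω else 1 - R i ω) ∂μ := by
        rw [lintegral_finset_sum _ fun b _ => hW b]
    _ = ∫⁻ ω, ∏ p ∈ C, ENNReal.ofReal (R p.2 ω) ∂μ := by
        refine lintegral_congr fun ω => ?_
        have hsum : ∑ b ∈ SC, ∏ j, ∏ i,
            ENNReal.ofReal (if b j i then R i ω else 1 - R i ω)
            = ∑ b' ∈ Finset.univ.filter
                (fun b' : Fin t × Fin n → Bool => ∀ p ∈ C, b' p = true),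
              ∏ p : Fin t × Fin n,
                ENNReal.ofReal (if b' p then R p.2 ω else 1 - R p.2 ω) := by
          refine Finset.sum_nbij' (fun b => fun p : Fin t × Fin n => b p.1 p.2)
            (fun b' => fun j i => b' (j, i)) ?_ ?_ ?_ ?_ ?_
          · intro b hb; simp only [hSC, Finset.mem_filter, Finset.mem_univ, true_and] at hb ⊢
            exact hb
          · intro b' hb'; simp only [hSC, Finset.mem_filter, Finset.mem_univ, true_and] at hb' ⊢
            exact hb'
          · intro b _; rfl
          · intro b' _; rfl
          · intro b _
            exact (Fintype.prod_prod_type fun p : Fin t × Fin n =>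
              ENNReal.ofReal (if b p.1 p.2 then R p.2 ω else 1 - R p.2 ω)).symm
        rw [hsum]
        exact sum_pi_bool_filter
          (fun p v => ENNReal.ofReal (if v then R p.2 ω else 1 - R p.2 ω))
          (fun p => by
            show ENNReal.ofReal (if true = true then _ else _)
              + ENNReal.ofReal (if false = true then _ else _) = 1
            rw [if_pos rfl, if_neg (by simp), ← ENNReal.ofReal_add (hI p.2 ω).1
              (sub_nonneg.2 (hI p.2 ω).2)]
            simp) C

lemma lintegral_prod_indep {Ω : Type*} [MeasurableSpace Ω] (μ : Measure Ω)
    [IsProbabilityMeasure μ] {ι : Type*} (F : ι → Ω → ℝ≥0∞) (hF : ∀ i, Measurable (F i))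
    (hind : iIndepFun F μ) (s : Finset ι) :
    ∫⁻ ω, ∏ i ∈ s, F i ω ∂μ = ∏ i ∈ s, ∫⁻ ω, F i ω ∂μ := by
  classical
  induction s using Finset.cons_induction with
  | empty => simp
  | cons a s ha ih =>
    have hindep : IndepFun (∏ j ∈ s, F j) (F a) μ :=
      hind.indepFun_finsetProd_of_notMem hF ha
    have hmeas : Measurable (∏ j ∈ s, F j) := by
      rw [show (∏ j ∈ s, F j) = fun ω => ∏ j ∈ s, F j ω from funext fun ω => by
        simp [Finset.prod_apply]]
      exact Finset.measurable_prod _ fun j _ => hF j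
    have := lintegral_mul_eq_lintegral_mul_lintegral_of_indepFun hmeas (hF a) hindep
    simp only [Pi.mul_apply, Finset.prod_apply] at this
    calc ∫⁻ ω, ∏ i ∈ Finset.cons a s ha, F i ω ∂μ
        = ∫⁻ ω, (∏ i ∈ s, F i ω) * F a ω ∂μ := by
          refine lintegral_congr fun ω => ?_
          rw [Finset.prod_cons, mul_comm]
      _ = (∫⁻ ω, ∏ i ∈ s, F i ω ∂μ) * ∫⁻ ω, F a ω ∂μ := this
      _ = ∏ i ∈ Finset.cons a s ha, ∫⁻ ω, F i ω ∂μ := by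
          rw [ih, Finset.prod_cons, mul_comm]

lemma lintegral_pow_eq_moment {Ω : Type*} [MeasurableSpace Ω] (μ : Measure Ω)
    [IsProbabilityMeasure μ] {n : ℕ} (R : Fin n → Ω → ℝ) (ρ : Measure ℝ)
    (hR : ∀ i, Measurable (R i)) (hI : ∀ i ω, R i ω ∈ Set.Icc (0:ℝ) 1)
    (hmap : ∀ i, μ.map (R i) = ρ) (i : Fin n) (e : ℕ) :
    ∫⁻ ω, ENNReal.ofReal (R i ω) ^ e ∂μ = ENNReal.ofReal (moment ρ e) := by
  have h1 : ∀ ω, ENNReal.ofReal (R i ω) ^ e = ENNReal.ofReal (R i ω ^ e) := fun ω =>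
    (ENNReal.ofReal_pow (hI i ω).1 e).symm
  simp only [h1]
  have hint : Integrable (fun ω => R i ω ^ e) μ := by
    refine (integrable_const (1:ℝ)).mono' ((hR i).pow_const e).aestronglyMeasurable ?_
    filter_upwards with ω
    rw [Real.norm_eq_abs, abs_of_nonneg (pow_nonneg (hI i ω).1 e)]
    exact pow_le_one₀ (hI i ω).1 (hI i ω).2
  rw [← MeasureTheory.ofReal_integral_eq_lintegral_ofReal hint
    (Filter.Eventually.of_forall fun ω => pow_nonneg (hI i ω).1 e)]
  congr 1
  rw [moment, ← hmap i, integral_map (hR i).aemeasurable]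
  exact (measurable_id.pow_const e).aestronglyMeasurable

lemma lintegral_prod_ofReal_eq {Ω : Type*} [MeasurableSpace Ω] (μ : Measure Ω)
    [IsProbabilityMeasure μ] {n t : ℕ} (R : Fin n → Ω → ℝ) (ρ : Measure ℝ)
    (hR : ∀ i, Measurable (R i)) (hI : ∀ i ω, R i ω ∈ Set.Icc (0:ℝ) 1)
    (hind : iIndepFun R μ) (hmap : ∀ i, μ.map (R i) = ρ)
    (C : Finset (Fin t × Fin n)) :
    ∫⁻ ω, ∏ p ∈ C, ENNReal.ofReal (R p.2 ω) ∂μ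
      = ∏ i : Fin n, ENNReal.ofReal (moment ρ ((C.filter fun p => p.2 = i).card)) := by
  classical
  have hpt : ∀ ω, ∏ p ∈ C, ENNReal.ofReal (R p.2 ω)
      = ∏ i : Fin n, ENNReal.ofReal (R i ω) ^ ((C.filter fun p => p.2 = i).card) := by
    intro ω
    rw [← Finset.prod_fiberwise_of_maps_to' (fun p _ => Finset.mem_univ p.2)
      (fun i => ENNReal.ofReal (R i ω))]
    exact Finset.prod_congr rfl fun i _ => Finset.prod_const _
  simp only [hpt]
  have hFmeas : ∀ i : Fin n, Measurable fun ω =>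
      ENNReal.ofReal (R i ω) ^ ((C.filter fun p => p.2 = i).card) :=
    fun i => ((hR i).ennreal_ofReal).pow_const _
  have hFind : iIndepFun
      (fun i ω => ENNReal.ofReal (R i ω) ^ ((C.filter fun p => p.2 = i).card)) μ :=
    hind.comp (fun i x => ENNReal.ofReal x ^ ((C.filter fun p => p.2 = i).card))
      (fun i => ENNReal.measurable_ofReal.pow_const _)
  rw [lintegral_prod_indep μ _ hFmeas hFind Finset.univ]
  exact Finset.prod_congr rfl fun i _ =>
    lintegral_pow_eq_moment μ R ρ hR hI hmap i _

lemma ofReal_moment_eq (ρ : Measure ℝ) [IsProbabilityMeasure ρ]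
    (hae : ∀ᵐ x ∂ρ, x ∈ Set.Icc (0:ℝ) 1) (c : ℕ) :
    ENNReal.ofReal (moment ρ c) = ∫⁻ x, ENNReal.ofReal x ^ c ∂ρ := by
  have hint : Integrable (fun x : ℝ => x ^ c) ρ := by
    refine (integrable_const (1:ℝ)).mono' (measurable_id.pow_const c).aestronglyMeasurable ?_
    filter_upwards [hae] with x hx
    rw [Real.norm_eq_abs, abs_of_nonneg (pow_nonneg hx.1 c)]
    exact pow_le_one₀ hx.1 hx.2
  rw [moment, MeasureTheory.ofReal_integral_eq_lintegral_ofReal hint ?_]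
  · refine lintegral_congr_ae ?_
    filter_upwards [hae] with x hx
    exact (ENNReal.ofReal_pow hx.1 c)
  · filter_upwards [hae] with x hx
    exact pow_nonneg hx.1 c

lemma moment_nonneg (ρ : Measure ℝ) (hae : ∀ᵐ x ∂ρ, x ∈ Set.Icc (0:ℝ) 1) (c : ℕ) :
    0 ≤ moment ρ c :=
  integral_nonneg_of_ae <| by filter_upwards [hae] with x hx; exact pow_nonneg hx.1 c

lemma moment_le_rpow (ρ : Measure ℝ) [IsProbabilityMeasure ρ]
    (hae : ∀ᵐ x ∂ρ, x ∈ Set.Icc (0:ℝ) 1) (a b : ℕ) (hab : a ≤ b) (hb : 0 < b) :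
    moment ρ a ≤ moment ρ b ^ ((a : ℝ) / (b : ℝ)) := by
  set p : ℝ := (a : ℝ) / (b : ℝ) with hp
  have hbne : (b : ℝ) ≠ 0 := Nat.cast_ne_zero.2 hb.ne'
  have hp0 : 0 ≤ p := div_nonneg (Nat.cast_nonneg a) (Nat.cast_nonneg b)
  have hp1 : p ≤ 1 := by
    rw [hp, div_le_one (by exact_mod_cast hb)]
    exact_mod_cast hab
  have key : (∫⁻ x, ENNReal.ofReal x ^ a ∂ρ)
      ≤ (∫⁻ x, ENNReal.ofReal x ^ b ∂ρ) ^ p := by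
    have H := ENNReal.lintegral_mul_norm_pow_le (μ := ρ)
      (f := fun x => ENNReal.ofReal x ^ b) (g := fun _ => (1 : ℝ≥0∞))
      ((ENNReal.measurable_ofReal.pow_const b).aemeasurable) aemeasurable_const
      hp0 (by linarith : (0:ℝ) ≤ 1 - p) (by ring)
    calc (∫⁻ x, ENNReal.ofReal x ^ a ∂ρ)
        = ∫⁻ x, (ENNReal.ofReal x ^ b) ^ p * (1:ℝ≥0∞) ^ (1 - p) ∂ρ := by
          refine lintegral_congr fun x => ?_
          rw [ENNReal.one_rpow, mul_one, ← ENNReal.rpow_natCast _ b, ← ENNReal.rpow_mul]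
          rw [show (b : ℝ) * p = (a : ℝ) by rw [hp]; field_simp]
          rw [ENNReal.rpow_natCast]
      _ ≤ (∫⁻ x, ENNReal.ofReal x ^ b ∂ρ) ^ p * (∫⁻ _, (1:ℝ≥0∞) ∂ρ) ^ (1 - p) := H
      _ = (∫⁻ x, ENNReal.ofReal x ^ b ∂ρ) ^ p := by
          simp [lintegral_one]
  have hLb_le : (∫⁻ x, ENNReal.ofReal x ^ b ∂ρ) ≤ 1 := by
    calc (∫⁻ x, ENNReal.ofReal x ^ b ∂ρ) ≤ ∫⁻ _, (1:ℝ≥0∞) ∂ρ := by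
          refine lintegral_mono_ae ?_
          filter_upwards [hae] with x hx
          exact pow_le_one' (by simpa using ENNReal.ofReal_le_one.2 hx.2) b
      _ = 1 := by simp
  have hfin : (∫⁻ x, ENNReal.ofReal x ^ b ∂ρ) ^ p ≠ ∞ :=
    (ENNReal.rpow_lt_top_of_nonneg hp0 (lt_of_le_of_lt hLb_le ENNReal.one_lt_top).ne).ne
  have h1 : moment ρ a = (∫⁻ x, ENNReal.ofReal x ^ a ∂ρ).toReal := by
    rw [← ofReal_moment_eq ρ hae a, ENNReal.toReal_ofReal (moment_nonneg ρ hae a)]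
  have h2 : moment ρ b = (∫⁻ x, ENNReal.ofReal x ^ b ∂ρ).toReal := by
    rw [← ofReal_moment_eq ρ hae b, ENNReal.toReal_ofReal (moment_nonneg ρ hae b)]
  rw [h1, h2, ENNReal.toReal_rpow]
  exact ENNReal.toReal_mono hfin key


lemma moment_le_one (ρ : Measure ℝ) [IsProbabilityMeasure ρ]
    (hae : ∀ᵐ x ∂ρ, x ∈ Set.Icc (0:ℝ) 1) (c : ℕ) : moment ρ c ≤ 1 := by
  have hint : Integrable (fun x : ℝ => x ^ c) ρ := by
    refine (integrable_const (1:ℝ)).mono' (measurable_id.pow_const c).aestronglyMeasurable ?_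
    filter_upwards [hae] with x hx
    rw [Real.norm_eq_abs, abs_of_nonneg (pow_nonneg hx.1 c)]
    exact pow_le_one₀ hx.1 hx.2
  calc moment ρ c ≤ ∫ _, (1:ℝ) ∂ρ := by
        refine integral_mono_ae hint (integrable_const 1) ?_
        filter_upwards [hae] with x hx
        exact pow_le_one₀ hx.1 hx.2
    _ = 1 := by simp

/-- **Unconditional bound on `E[Z_X Z_Y]` in the mixed model.**
Let `X ≠ Y` be `k`-element itemsets with `g = |X ∩ Y| ≥ 1` and `1 ≤ s ≤ t`. Then
`E[Z_X Z_Y] ≤ Σ_{i=0}^{s} t^{2s−i} · (E[R^{2s}])^{k − ig/(2s)}`. -/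
theorem EZXZY_bound_mixed
    {Ω : Type*} [MeasurableSpace Ω] (μ : Measure Ω) [IsProbabilityMeasure μ]
    {n t : ℕ} (R : Fin n → Ω → ℝ) (A : Fin t → Fin n → Ω → Bool)
    (ρ : Measure ℝ) [IsProbabilityMeasure ρ]
    (hM : MixedModel μ R A ρ)
    (k s g : ℕ) (hk : 1 ≤ k) (hs : 1 ≤ s) (hst : s ≤ t)
    (X Y : Finset (Fin n)) (hX : X.card = k) (hY : Y.card = k) (hne : X ≠ Y)
    (hg : (X ∩ Y).card = g) (hg1 : 1 ≤ g) :
    pXY μ A s X Y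
      ≤ ∑ i ∈ Finset.range (s + 1),
          (t : ℝ) ^ (2 * s - i)
            * moment ρ (2 * s) ^ ((k : ℝ) - (i : ℝ) * (g : ℝ) / (2 * (s : ℝ))) := by
  classical
  obtain ⟨hR, hA, hI, hind, hmap, hlaw⟩ := hM
  obtain ⟨i₀, hi₀X⟩ : ∃ i, i ∈ X := Finset.card_pos.mp (by rw [hX]; omega)
  have hae : ∀ᵐ x ∂ρ, x ∈ Set.Icc (0:ℝ) 1 := by
    rw [← hmap i₀]
    exact (MeasureTheory.ae_map_iff (hR i₀).aemeasurable measurableSet_Icc).mpr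
      (Filter.Eventually.of_forall fun ω => hI i₀ ω)
  set M := moment ρ (2 * s) with hMdef
  have hMnn : 0 ≤ M := moment_nonneg ρ hae _
  have hM1 : M ≤ 1 := moment_le_one ρ hae _
  have h2s : 0 < 2 * s := by omega
  set P : Finset (Finset (Fin t)) := Finset.univ.powersetCard s with hP
  set Cp : Finset (Fin t) × Finset (Fin t) → Finset (Fin t × Fin n) :=
    fun p => p.1 ×ˢ X ∪ p.2 ×ˢ Y with hCp
  set G : Finset (Fin t) × Finset (Fin t) → Set Ω :=
    fun p => {ω | ∀ q ∈ Cp p, A q.1 q.2 ω = true} with hG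
  set e : Finset (Fin t) × Finset (Fin t) → Fin n → ℕ :=
    fun p i => ((Cp p).filter fun q => q.2 = i).card with he
  -- value of each term
  have hval : ∀ p, (μ (G p)).toReal = ∏ i : Fin n, moment ρ (e p i) := by
    intro p
    rw [hG]
    rw [measure_allTrue μ R A hR hA hI hlaw (Cp p),
      lintegral_prod_ofReal_eq μ R ρ hR hI hind hmap (Cp p), ENNReal.toReal_prod]
    exact Finset.prod_congr rfl fun i _ => ENNReal.toReal_ofReal (moment_nonneg ρ hae _)
  -- the per-pair bound
  have hbound : ∀ m, m ≤ s → ∀ p ∈ (P ×ˢ P).filter (fun p => (p.1 ∩ p.2).card = m),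
      (μ (G p)).toReal ≤ M ^ ((k:ℝ) - (m:ℝ) * (g:ℝ) / (2 * (s:ℝ))) := by
    intro m hm p hp
    simp only [Finset.mem_filter, Finset.mem_product, hP, mem_powersetCard_univ] at hp
    obtain ⟨⟨hp1, hp2⟩, hpm⟩ := hp
    rw [hval p]
    have heunion : ∀ i, e p i ≤ 2 * s := by
      intro i
      have hsub2 : (Cp p).filter (fun q => q.2 = i) ⊆ (p.1 ∪ p.2) ×ˢ ({i} : Finset (Fin n)) := by
        intro q hq
        simp only [Finset.mem_filter, hCp, Finset.mem_union, Finset.mem_product,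
          Finset.mem_singleton] at hq ⊢
        rcases hq.1 with h | h
        · exact ⟨Or.inl h.1, hq.2⟩
        · exact ⟨Or.inr h.1, hq.2⟩
      calc e p i ≤ ((p.1 ∪ p.2) ×ˢ ({i} : Finset (Fin n))).card := Finset.card_le_card hsub2
        _ = (p.1 ∪ p.2).card := by rw [Finset.card_product, Finset.card_singleton, mul_one]
        _ ≤ 2 * s := by have := Finset.card_union_le p.1 p.2; omega
    by_cases hM0 : M = 0
    · obtain ⟨iXY, hiXY⟩ : ∃ i, i ∈ X ∩ Y := Finset.card_pos.mp (by rw [hg]; omega)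
      obtain ⟨j₀, hj₀⟩ : ∃ j, j ∈ p.1 := Finset.card_pos.mp (by rw [hp1]; omega)
      have hepos : 0 < e p iXY := by
        refine Finset.card_pos.mpr ⟨(j₀, iXY), ?_⟩
        simp only [he, Finset.mem_filter, hCp, Finset.mem_union, Finset.mem_product]
        exact ⟨Or.inl ⟨hj₀, (Finset.mem_inter.mp hiXY).1⟩, trivial⟩
      have hz : moment ρ (e p iXY) = 0 := by
        have h1 := moment_le_rpow ρ hae (e p iXY) (2*s) (heunion iXY) h2s
        rw [← hMdef, hM0, Real.zero_rpow (div_ne_zero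
          (Nat.cast_ne_zero.mpr hepos.ne' : (e p iXY : ℝ) ≠ 0)
          (by exact_mod_cast h2s.ne' : ((2*s : ℕ) : ℝ) ≠ 0))] at h1
        exact le_antisymm h1 (moment_nonneg ρ hae _)
      rw [Finset.prod_eq_zero (Finset.mem_univ iXY) hz]
      exact Real.rpow_nonneg hMnn _
    · have hMpos : 0 < M := lt_of_le_of_ne hMnn (Ne.symm hM0)
      have hfac : ∀ i : Fin n, moment ρ (e p i) ≤ M ^ ((e p i : ℝ) / ((2*s : ℕ) : ℝ)) :=
        fun i => moment_le_rpow ρ hae (e p i) (2*s) (heunion i) h2s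
      calc ∏ i : Fin n, moment ρ (e p i)
          ≤ ∏ i : Fin n, M ^ ((e p i : ℝ) / ((2*s : ℕ) : ℝ)) :=
            Finset.prod_le_prod (fun i _ => moment_nonneg ρ hae _) (fun i _ => hfac i)
        _ = M ^ (∑ i : Fin n, (e p i : ℝ) / ((2*s : ℕ) : ℝ)) :=
            (Real.rpow_sum_of_pos hMpos _ _).symm
        _ ≤ M ^ ((k:ℝ) - (m:ℝ) * (g:ℝ) / (2 * (s:ℝ))) := by
            refine Real.rpow_le_rpow_of_exponent_ge hMpos hM1 ?_
            have hcardsum : (Cp p).card = ∑ i : Fin n, e p i :=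
              Finset.card_eq_sum_card_fiberwise (fun q _ => Finset.mem_univ q.2)
            have hCcard : (Cp p).card + m * g = s * k + s * k := by
              have h1 := Finset.card_union_add_card_inter (p.1 ×ˢ X) (p.2 ×ˢ Y)
              rw [Finset.product_inter_product, Finset.card_product, Finset.card_product,
                Finset.card_product, hpm, hg, hp1, hp2, hX, hY] at h1
              rw [hCp]
              exact h1
            have hsum : ∑ i : Fin n, (e p i : ℝ) / ((2*s : ℕ) : ℝ)
                = (((Cp p).card : ℕ) : ℝ) / ((2*s : ℕ) : ℝ) := by
              rw [← Finset.sum_div, hcardsum]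
              push_cast
              ring
            rw [hsum]
            have hc : (((Cp p).card : ℕ) : ℝ) = 2 * (s:ℝ) * (k:ℝ) - (m:ℝ) * (g:ℝ) := by
              have : ((Cp p).card : ℝ) + (m:ℝ) * (g:ℝ) = (s:ℝ) * k + (s:ℝ) * k := by
                exact_mod_cast congrArg (Nat.cast : ℕ → ℝ) hCcard
              linarith
            rw [hc, show ((2*s : ℕ) : ℝ) = 2 * (s:ℝ) from by push_cast; ring]
            have hspos : (0:ℝ) < 2 * (s:ℝ) := by
              have h1s : (1:ℝ) ≤ (s:ℝ) := by exact_mod_cast hs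
              linarith
            refine le_of_eq ?_
            rw [eq_div_iff hspos.ne', sub_mul, div_mul_cancel₀ _ hspos.ne']
            ring
  -- inclusion in the union
  have hsub : ({ω | s ≤ support A X ω} ∩ {ω | s ≤ support A Y ω} : Set Ω)
      ⊆ ⋃ p ∈ P ×ˢ P, G p := by
    rintro ω ⟨hωX, hωY⟩
    have hωX' : s ≤ (Finset.univ.filter fun j => ∀ i ∈ X, A j i ω = true).card := hωX
    have hωY' : s ≤ (Finset.univ.filter fun j => ∀ i ∈ Y, A j i ω = true).card := hωY
    obtain ⟨S, hSsub, hScard⟩ := Finset.exists_subset_card_eq hωX'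
    obtain ⟨T, hTsub, hTcard⟩ := Finset.exists_subset_card_eq hωY'
    have hmem : ((S, T) : Finset (Fin t) × Finset (Fin t)) ∈ P ×ˢ P := by
      simp only [hP, Finset.mem_product, mem_powersetCard_univ]
      exact ⟨hScard, hTcard⟩
    refine Set.mem_biUnion hmem ?_
    rw [hG]
    intro q hq
    simp only [hCp, Finset.mem_union, Finset.mem_product] at hq
    rcases hq with h | h
    · have := hSsub h.1
      rw [Finset.mem_filter] at this
      exact this.2 q.2 h.2
    · have := hTsub h.1
      rw [Finset.mem_filter] at this
      exact this.2 q.2 h.2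
  -- put everything together
  have hEsub : pXY μ A s X Y ≤ ∑ p ∈ P ×ˢ P, (μ (G p)).toReal := by
    have h1 : μ ({ω | s ≤ support A X ω} ∩ {ω | s ≤ support A Y ω})
        ≤ ∑ p ∈ P ×ˢ P, μ (G p) :=
      (measure_mono hsub).trans (measure_biUnion_finset_le _ _)
    have h2 : (∑ p ∈ P ×ˢ P, μ (G p)) ≠ ∞ :=
      (ENNReal.sum_lt_top.mpr fun p _ => measure_lt_top μ _).ne
    calc pXY μ A s X Y
        = (μ ({ω | s ≤ support A X ω} ∩ {ω | s ≤ support A Y ω})).toReal := rfl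
      _ ≤ (∑ p ∈ P ×ˢ P, μ (G p)).toReal := ENNReal.toReal_mono h2 h1
      _ = ∑ p ∈ P ×ˢ P, (μ (G p)).toReal :=
          ENNReal.toReal_sum fun p _ => measure_ne_top μ _
  have hgroup : ∑ p ∈ P ×ˢ P, (μ (G p)).toReal
      = ∑ m ∈ Finset.range (s+1), ∑ p ∈ (P ×ˢ P).filter (fun p => (p.1 ∩ p.2).card = m),
          (μ (G p)).toReal := by
    refine (Finset.sum_fiberwise_of_maps_to (fun p hp => ?_) _).symm
    simp only [Finset.mem_product, hP, mem_powersetCard_univ] at hp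
    rw [Finset.mem_range]
    have : (p.1 ∩ p.2).card ≤ p.1.card := Finset.card_le_card (Finset.inter_subset_left)
    omega
  refine hEsub.trans ?_
  rw [hgroup]
  refine Finset.sum_le_sum fun m hm => ?_
  have hm' : m ≤ s := by
    rw [Finset.mem_range] at hm
    omega
  calc ∑ p ∈ (P ×ˢ P).filter (fun p => (p.1 ∩ p.2).card = m), (μ (G p)).toReal
      ≤ ∑ p ∈ (P ×ˢ P).filter (fun p => (p.1 ∩ p.2).card = m),
          M ^ ((k:ℝ) - (m:ℝ) * (g:ℝ) / (2 * (s:ℝ))) :=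
        Finset.sum_le_sum (hbound m hm')
    _ = (((P ×ˢ P).filter (fun p => (p.1 ∩ p.2).card = m)).card : ℝ)
          * M ^ ((k:ℝ) - (m:ℝ) * (g:ℝ) / (2 * (s:ℝ))) := by
        rw [Finset.sum_const, nsmul_eq_mul]
    _ ≤ (t:ℝ) ^ (2*s - m) * M ^ ((k:ℝ) - (m:ℝ) * (g:ℝ) / (2 * (s:ℝ))) := by
        refine mul_le_mul_of_nonneg_right ?_ (Real.rpow_nonneg hMnn _)
        have hcount := count_pairs t s m hm'
        rw [← hP] at hcount
        calc (((P ×ˢ P).filter (fun p => (p.1 ∩ p.2).card = m)).card : ℝ)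
            ≤ ((t ^ (2*s - m) : ℕ) : ℝ) := Nat.cast_le.mpr hcount
          _ = (t:ℝ) ^ (2*s - m) := by push_cast; ring


end PaperModel
end
end

section
/- Fix integers k ≥ 2 and s ≥ 2, constants γ > 0 and 0 < c ≤ (k−1)(1−1/s), and consider for each n the random dataset model with common item probability p = γ/n and t = t(n) transactions with t(n) = O(n^c). Then as n → ∞, b_1(s) + b_2(s) = O(1/n^{2s−2}). -/
open MeasureTheory ProbabilityTheory Finset Filter Asymptotics

noncomputable section

namespace PaperModel

variable {Ω : Type*}

section Helpers

variable [MeasurableSpace Ω] {μ : Measure Ω} {n t : ℕ}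

private lemma meas_biInter_eq_pow
    (A : Fin t → Fin n → Ω → Bool)
    (hindep : iIndepFun
      (fun p : Fin t × Fin n => A p.1 p.2) μ)
    (q : ENNReal) (hq : ∀ j i, μ {ω | A j i ω = true} = q)
    (D : Finset (Fin t × Fin n)) :
    μ (⋂ p ∈ D, {ω | A p.1 p.2 ω = true}) = q ^ D.card := by
  have h := hindep.meas_biInter (S := D)
    (s := fun p => {ω | A p.1 p.2 ω = true}) ?_
  · rw [h]
    simp only [hq]
    rw [Finset.prod_const]
  · intro p _
    refine ⟨{true}, ?_, ?_⟩
    · exact MeasurableSet.singleton true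
    · ext ω; simp [Set.mem_preimage]

omit [MeasurableSpace Ω] in
private lemma event_subset (A : Fin t → Fin n → Ω → Bool) (X : Finset (Fin n)) (s : ℕ) :
    {ω | s ≤ support A X ω} ⊆
      ⋃ S ∈ (Finset.univ : Finset (Fin t)).powersetCard s,
        ⋂ p ∈ S ×ˢ X, {ω | A p.1 p.2 ω = true} := by
  intro ω hω
  obtain ⟨S, hSsub, hScard⟩ := Finset.exists_subset_card_eq hω
  have hS : S ∈ (Finset.univ : Finset (Fin t)).powersetCard s :=
    Finset.mem_powersetCard.2 ⟨Finset.subset_univ _, hScard⟩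
  refine Set.mem_biUnion hS ?_
  simp only [Set.mem_iInter]
  intro p hp
  obtain ⟨hp1, hp2⟩ := Finset.mem_product.1 hp
  have := hSsub hp1
  simp only [Finset.mem_filter] at this
  exact this.2 p.2 hp2

private lemma pX_le (A : Fin t → Fin n → Ω → Bool)
    (hindep : iIndepFun
      (fun p : Fin t × Fin n => A p.1 p.2) μ)
    {q : ℝ} (hq0 : 0 ≤ q) (hq : ∀ j i, μ {ω | A j i ω = true} = ENNReal.ofReal q)
    (X : Finset (Fin n)) (s : ℕ) :
    pX μ A s X ≤ (t.choose s : ℝ) * q ^ (s * X.card) := by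
  have hsub := event_subset A X s
  have h1 : μ {ω | s ≤ support A X ω} ≤
      ∑ S ∈ (Finset.univ : Finset (Fin t)).powersetCard s,
        μ (⋂ p ∈ S ×ˢ X, {ω | A p.1 p.2 ω = true}) :=
    (measure_mono hsub).trans (measure_biUnion_finset_le _ _)
  have h2 : ∀ S ∈ (Finset.univ : Finset (Fin t)).powersetCard s,
      μ (⋂ p ∈ S ×ˢ X, {ω | A p.1 p.2 ω = true})
        = ENNReal.ofReal (q ^ (s * X.card)) := by
    intro S hS
    rw [meas_biInter_eq_pow A hindep _ hq]
    rw [Finset.card_product, (Finset.mem_powersetCard.1 hS).2,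
      ENNReal.ofReal_pow hq0]
  rw [Finset.sum_congr rfl h2, Finset.sum_const, Finset.card_powersetCard,
    Finset.card_univ, Fintype.card_fin, nsmul_eq_mul] at h1
  calc pX μ A s X
      ≤ ((t.choose s : ENNReal) * ENNReal.ofReal (q ^ (s * X.card))).toReal := by
        refine ENNReal.toReal_mono ?_ h1
        exact ENNReal.mul_ne_top (ENNReal.natCast_ne_top _) ENNReal.ofReal_ne_top
    _ = (t.choose s : ℝ) * q ^ (s * X.card) := by
        rw [ENNReal.toReal_mul, ENNReal.toReal_ofReal (pow_nonneg hq0 _)]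
        simp

omit [MeasurableSpace Ω] in
private lemma card_union_product {S T : Finset (Fin t)} {X Y : Finset (Fin n)} {s k : ℕ}
    (hS : S.card = s) (hT : T.card = s) (hX : X.card = k) (hY : Y.card = k) :
    ((S ×ˢ X) ∪ (T ×ˢ Y)).card = 2 * (s * k) - (S ∩ T).card * (X ∩ Y).card := by
  have h := Finset.card_union_add_card_inter (S ×ˢ X) (T ×ˢ Y)
  rw [Finset.product_inter_product] at h
  rw [Finset.card_product, Finset.card_product, Finset.card_product, hS, hT, hX, hY] at h
  have hle : (S ∩ T).card * (X ∩ Y).card ≤ s * k :=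
    Nat.mul_le_mul (hS ▸ Finset.card_le_card Finset.inter_subset_left)
      (hX ▸ Finset.card_le_card Finset.inter_subset_left)
  omega

private lemma pXY_le (A : Fin t → Fin n → Ω → Bool)
    (hindep : iIndepFun
      (fun p : Fin t × Fin n => A p.1 p.2) μ)
    {q : ℝ} (hq0 : 0 ≤ q)
    (hq : ∀ j i, μ {ω | A j i ω = true} = ENNReal.ofReal q)
    {X Y : Finset (Fin n)} {k : ℕ} (hX : X.card = k) (hY : Y.card = k) (s : ℕ) :
    pXY μ A s X Y ≤
      ∑ S ∈ (Finset.univ : Finset (Fin t)).powersetCard s,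
        ∑ T ∈ (Finset.univ : Finset (Fin t)).powersetCard s,
          q ^ (2 * (s * k) - (S ∩ T).card * (X ∩ Y).card) := by
  set P := (Finset.univ : Finset (Fin t)).powersetCard s with hP
  have hsub : ({ω | s ≤ support A X ω} ∩ {ω | s ≤ support A Y ω}) ⊆
      ⋃ S ∈ P, ⋃ T ∈ P, ⋂ p ∈ (S ×ˢ X) ∪ (T ×ˢ Y), {ω | A p.1 p.2 ω = true} := by
    intro ω hω
    have h1 := event_subset A X s hω.1
    have h2 := event_subset A Y s hω.2
    simp only [Set.mem_iUnion] at h1 h2 ⊢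
    obtain ⟨S, hS, hSω⟩ := h1
    obtain ⟨T, hT, hTω⟩ := h2
    refine ⟨S, hS, T, hT, ?_⟩
    rw [Finset.set_biInter_inter]
    exact ⟨hSω, hTω⟩
  have h1 : μ ({ω | s ≤ support A X ω} ∩ {ω | s ≤ support A Y ω}) ≤
      ∑ S ∈ P, ∑ T ∈ P,
        ENNReal.ofReal (q ^ (2 * (s * k) - (S ∩ T).card * (X ∩ Y).card)) := by
    refine (measure_mono hsub).trans ?_
    refine (measure_biUnion_finset_le _ _).trans ?_
    refine Finset.sum_le_sum fun S hS => ?_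
    refine (measure_biUnion_finset_le _ _).trans ?_
    refine Finset.sum_le_sum fun T hT => ?_
    rw [meas_biInter_eq_pow A hindep _ hq]
    rw [card_union_product (Finset.mem_powersetCard.1 hS).2
      (Finset.mem_powersetCard.1 hT).2 hX hY]
    rw [← ENNReal.ofReal_pow hq0]
  calc pXY μ A s X Y
      ≤ (∑ S ∈ P, ∑ T ∈ P,
          ENNReal.ofReal (q ^ (2 * (s * k) - (S ∩ T).card * (X ∩ Y).card))).toReal := by
        refine ENNReal.toReal_mono ?_ h1
        refine (ENNReal.sum_lt_top.2 fun S _ => ?_).ne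
        exact ENNReal.sum_lt_top.2 fun T _ => ENNReal.ofReal_lt_top
    _ = ∑ S ∈ P, ∑ T ∈ P, q ^ (2 * (s * k) - (S ∩ T).card * (X ∩ Y).card) := by
        rw [ENNReal.toReal_sum (fun S _ => ?_)]
        · refine Finset.sum_congr rfl fun S _ => ?_
          rw [ENNReal.toReal_sum (fun T _ => ENNReal.ofReal_ne_top)]
          exact Finset.sum_congr rfl fun T _ =>
            ENNReal.toReal_ofReal (pow_nonneg hq0 _)
        · exact (ENNReal.sum_lt_top.2 fun T _ => ENNReal.ofReal_lt_top).ne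

private lemma fiber_card_le {α : Type*} [Fintype α] [DecidableEq α]
    (X : Finset α) (kk i : ℕ) (B : Finset (Finset α)) (hB : ∀ Y ∈ B, Y.card = kk) :
    (B.filter (fun Y => (X ∩ Y).card = i)).card ≤
      2 ^ X.card * (Fintype.card α) ^ (kk - i) := by
  have hinj : ∀ Y ∈ B.filter (fun Y => (X ∩ Y).card = i),
      ∀ Z ∈ B.filter (fun Y => (X ∩ Y).card = i),
      (fun Y => (X ∩ Y, Y \ X)) Y = (fun Y => (X ∩ Y, Y \ X)) Z → Y = Z := by
    intro Y _ Z _ h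
    simp only [Prod.mk.injEq] at h
    have hY : (X ∩ Y) ∪ (Y \ X) = Y := by
      rw [Finset.inter_comm, Finset.union_comm, Finset.sdiff_union_inter]
    have hZ : (X ∩ Z) ∪ (Z \ X) = Z := by
      rw [Finset.inter_comm, Finset.union_comm, Finset.sdiff_union_inter]
    rw [← hY, ← hZ, h.1, h.2]
  have hmaps : ∀ Y ∈ B.filter (fun Y => (X ∩ Y).card = i),
      (fun Y => (X ∩ Y, Y \ X)) Y ∈
        X.powerset ×ˢ (Finset.univ : Finset α).powersetCard (kk - i) := by
    intro Y hY
    rw [Finset.mem_filter] at hY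
    rw [Finset.mem_product]
    constructor
    · exact Finset.mem_powerset.2 Finset.inter_subset_left
    · refine Finset.mem_powersetCard.2 ⟨Finset.subset_univ _, ?_⟩
      have h2 := Finset.card_inter_add_card_sdiff Y X
      have hk := hB Y hY.1
      have h3 : (Y ∩ X).card = i := by rw [Finset.inter_comm]; exact hY.2
      show (Y \ X).card = kk - i
      omega
  calc (B.filter (fun Y => (X ∩ Y).card = i)).card
      ≤ (X.powerset ×ˢ (Finset.univ : Finset α).powersetCard (kk - i)).card :=
        Finset.card_le_card_of_injOn _ hmaps hinj
    _ = 2 ^ X.card * (Fintype.card α).choose (kk - i) := by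
        rw [Finset.card_product, Finset.card_powerset, Finset.card_powersetCard,
          Finset.card_univ]
    _ ≤ 2 ^ X.card * (Fintype.card α) ^ (kk - i) :=
        Nat.mul_le_mul_left _ (Nat.choose_le_pow _ _)

private lemma sum_inter_card_le {α : Type*} [Fintype α] [DecidableEq α]
    (X : Finset α) (kk : ℕ) (B : Finset (Finset α)) (hB : ∀ Y ∈ B, Y.card = kk)
    (F : ℕ → ℝ) (hF : ∀ m, 0 ≤ F m) (I : Finset ℕ) (hI : ∀ Y ∈ B, (X ∩ Y).card ∈ I) :
    ∑ Y ∈ B, F ((X ∩ Y).card) ≤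
      ∑ i ∈ I, (2 ^ X.card * (Fintype.card α) ^ (kk - i) : ℕ) * F i := by
  rw [← Finset.sum_fiberwise_of_maps_to hI (fun Y => F ((X ∩ Y).card))]
  refine Finset.sum_le_sum fun i _ => ?_
  calc ∑ Y ∈ B.filter (fun Y => (X ∩ Y).card = i), F ((X ∩ Y).card)
      = ∑ Y ∈ B.filter (fun Y => (X ∩ Y).card = i), F i := by
        refine Finset.sum_congr rfl fun Y hY => ?_
        rw [(Finset.mem_filter.1 hY).2]
    _ = ((B.filter (fun Y => (X ∩ Y).card = i)).card : ℝ) * F i := by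
        rw [Finset.sum_const, nsmul_eq_mul]
    _ ≤ (2 ^ X.card * (Fintype.card α) ^ (kk - i) : ℕ) * F i := by
        refine mul_le_mul_of_nonneg_right ?_ (hF i)
        exact_mod_cast fiber_card_le X kk i B hB

private lemma exponent_le {k s : ℕ} (hk : 2 ≤ k) (hs : 2 ≤ s) {c : ℝ}
    (hc : c ≤ ((k : ℝ) - 1) * (1 - 1 / (s : ℝ))) {i r : ℕ}
    (hik : i ≤ k - 1) (hr : r ≤ s) :
    (2 * (k : ℝ) - i) + c * (2 * s - r) - (2 * ((s : ℝ) * k) - r * i) ≤ 2 - 2 * s := by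
  have hs0 : (0 : ℝ) < s := by positivity
  have hcs : c * s ≤ ((k : ℝ) - 1) * ((s : ℝ) - 1) := by
    have h := mul_le_mul_of_nonneg_right hc hs0.le
    have : ((k : ℝ) - 1) * (1 - 1 / (s : ℝ)) * s = ((k : ℝ) - 1) * ((s : ℝ) - 1) := by
      field_simp
    linarith [this ▸ h]
  have hri : (r : ℝ) ≤ s := by exact_mod_cast hr
  have hi0' : (0 : ℝ) ≤ i := Nat.cast_nonneg i
  have hik' : (i : ℝ) ≤ (k : ℝ) - 1 := by
    have : (i : ℝ) ≤ ((k - 1 : ℕ) : ℝ) := by exact_mod_cast hik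
    have hk1 : ((k - 1 : ℕ) : ℝ) = (k : ℝ) - 1 := by
      have : 1 ≤ k := le_trans (by norm_num) hk
      push_cast [this]; ring
    linarith [hk1 ▸ this]
  have hs2 : (2 : ℝ) ≤ s := by exact_mod_cast hs
  have hr0 : (0 : ℝ) ≤ r := by positivity
  have h1 : 0 ≤ ((s : ℝ) - r) * i := mul_nonneg (by linarith) hi0'
  have h2 : 0 ≤ (r : ℝ) * (((s : ℝ) - 1) * ((k : ℝ) - 1 - i)) := by
    apply mul_nonneg hr0
    apply mul_nonneg <;> linarith
  have hcr : c * (2 * (s : ℝ) - r) * s ≤ ((k : ℝ) - 1) * ((s : ℝ) - 1) * (2 * s - r) := by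
    have h2sr : (0 : ℝ) ≤ 2 * (s : ℝ) - r := by linarith
    calc c * (2 * (s : ℝ) - r) * s = (c * s) * (2 * s - r) := by ring
      _ ≤ ((k : ℝ) - 1) * ((s : ℝ) - 1) * (2 * s - r) :=
          mul_le_mul_of_nonneg_right hcs h2sr
  nlinarith [h1, h2, hcr, hs0]

private lemma term_le {k s : ℕ} (hk : 2 ≤ k) (hs : 2 ≤ s) {c : ℝ}
    (hc : c ≤ ((k : ℝ) - 1) * (1 - 1 / (s : ℝ))) {C γ nn tt : ℝ}
    (hC : 1 ≤ C) (hγ0 : 0 < γ) (hn1 : 1 ≤ nn) (hγn : γ ≤ nn)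
    (htt0 : 0 ≤ tt) (htt : tt ≤ C * nn ^ c)
    {i r : ℕ} (hik : i ≤ k - 1) (hr : r ≤ s) :
    nn ^ (2 * k - i) * tt ^ (2 * s - r) * (γ / nn) ^ (2 * (s * k) - r * i)
      ≤ C ^ (2 * s) * (max 1 γ) ^ (2 * (s * k)) * nn ^ ((2 : ℝ) - 2 * s) := by
  have hn0 : (0 : ℝ) < nn := lt_of_lt_of_le one_pos hn1
  have hik2 : i ≤ 2 * k := by omega
  have hr2 : r ≤ 2 * s := by omega
  have hri : r * i ≤ 2 * (s * k) := by
    have := Nat.mul_le_mul hr (show i ≤ k by omega)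
    omega
  have e1 : ((2 * k - i : ℕ) : ℝ) = 2 * k - i := by
    rw [Nat.cast_sub hik2]; push_cast; ring
  have e2 : ((2 * s - r : ℕ) : ℝ) = 2 * s - r := by
    rw [Nat.cast_sub hr2]; push_cast; ring
  have e3 : ((2 * (s * k) - r * i : ℕ) : ℝ) = 2 * (s * k) - r * i := by
    rw [Nat.cast_sub hri]; push_cast; ring
  set m := 2 * (s * k) - r * i with hm
  have h2 : tt ^ (2 * s - r) ≤ C ^ (2 * s - r) * nn ^ (c * ((2 * s - r : ℕ) : ℝ)) := by
    calc tt ^ (2 * s - r) ≤ (C * nn ^ c) ^ (2 * s - r) :=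
          pow_le_pow_left₀ htt0 htt _
      _ = C ^ (2 * s - r) * (nn ^ c) ^ (2 * s - r) := mul_pow _ _ _
      _ = C ^ (2 * s - r) * nn ^ (c * ((2 * s - r : ℕ) : ℝ)) := by
          rw [← Real.rpow_natCast (nn ^ c) (2 * s - r), ← Real.rpow_mul hn0.le]
  have h3 : (γ / nn) ^ m = γ ^ m * nn ^ (-((m : ℕ) : ℝ)) := by
    rw [div_pow, ← Real.rpow_natCast nn m, div_eq_mul_inv, ← Real.rpow_neg hn0.le]
  have h4 : nn ^ (2 * k - i) = nn ^ (((2 * k - i : ℕ)) : ℝ) :=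
    (Real.rpow_natCast nn _).symm
  have hCpos : (0 : ℝ) < C := lt_of_lt_of_le one_pos hC
  have hrpow_pos : ∀ x : ℝ, (0:ℝ) < nn ^ x := fun x => Real.rpow_pos_of_pos hn0 x
  calc nn ^ (2 * k - i) * tt ^ (2 * s - r) * (γ / nn) ^ m
      ≤ nn ^ (2 * k - i) * (C ^ (2 * s - r) * nn ^ (c * ((2 * s - r : ℕ) : ℝ)))
          * (γ / nn) ^ m := by
        refine mul_le_mul_of_nonneg_right (mul_le_mul_of_nonneg_left h2 (by positivity)) ?_
        positivity
    _ = C ^ (2 * s - r) * γ ^ m *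
        (nn ^ (((2 * k - i : ℕ)) : ℝ) * nn ^ (c * ((2 * s - r : ℕ) : ℝ))
          * nn ^ (-((m : ℕ) : ℝ))) := by
        rw [h3, h4]; ring
    _ = C ^ (2 * s - r) * γ ^ m *
        nn ^ ((((2 * k - i : ℕ)) : ℝ) + c * ((2 * s - r : ℕ) : ℝ) + (-((m : ℕ) : ℝ))) := by
        rw [← Real.rpow_add hn0, ← Real.rpow_add hn0]
    _ ≤ C ^ (2 * s) * (max 1 γ) ^ (2 * (s * k)) * nn ^ ((2 : ℝ) - 2 * s) := by
        have hmax1 : (1 : ℝ) ≤ max 1 γ := le_max_left _ _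
        refine mul_le_mul ?_ ?_ (hrpow_pos _).le (by positivity)
        · refine mul_le_mul ?_ ?_ (by positivity) (by positivity)
          · exact pow_le_pow_right₀ hC (by omega)
          · calc γ ^ m ≤ (max 1 γ) ^ m :=
                pow_le_pow_left₀ hγ0.le (le_max_right _ _) _
              _ ≤ (max 1 γ) ^ (2 * (s * k)) := pow_le_pow_right₀ hmax1 (by omega)
        · refine Real.rpow_le_rpow_of_exponent_le hn1 ?_
          rw [e1, e2, hm, e3]
          have := exponent_le hk hs hc hik hr (c := c)
          push_cast
          push_cast at this
          linarith

private lemma b1_le (A : Fin t → Fin n → Ω → Bool)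
    (hindep : iIndepFun
      (fun p : Fin t × Fin n => A p.1 p.2) μ)
    {q : ℝ} (hq0 : 0 ≤ q)
    (hq : ∀ j i, μ {ω | A j i ω = true} = ENNReal.ofReal q) (k s : ℕ) :
    b1 μ A k s ≤ (n.choose k : ℝ) ^ 2 * ((t.choose s : ℝ) * q ^ (s * k)) ^ 2 := by
  set β : ℝ := (t.choose s : ℝ) * q ^ (s * k) with hβ
  have hβ0 : 0 ≤ β := by positivity
  have hterm : ∀ X ∈ (Finset.univ : Finset (Fin n)).powersetCard k,
      ∀ Y ∈ ((Finset.univ : Finset (Fin n)).powersetCard k).filter (fun Y => Y ∩ X ≠ ∅),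
      pX μ A s X * pX μ A s Y ≤ β * β := by
    intro X hX Y hY
    have hXk := (Finset.mem_powersetCard.1 hX).2
    have hYk := (Finset.mem_powersetCard.1 (Finset.mem_filter.1 hY).1).2
    have h1 : pX μ A s X ≤ β := by
      have := pX_le A hindep hq0 hq X s; rw [hXk] at this; exact this
    have h2 : pX μ A s Y ≤ β := by
      have := pX_le A hindep hq0 hq Y s; rw [hYk] at this; exact this
    exact mul_le_mul h1 h2 ENNReal.toReal_nonneg hβ0
  calc b1 μ A k s
      ≤ ∑ X ∈ (Finset.univ : Finset (Fin n)).powersetCard k,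
          ∑ _Y ∈ ((Finset.univ : Finset (Fin n)).powersetCard k).filter
            (fun Y => Y ∩ X ≠ ∅), β * β := by
        refine Finset.sum_le_sum fun X hX => Finset.sum_le_sum fun Y hY => ?_
        exact hterm X hX Y hY
    _ ≤ ∑ _X ∈ (Finset.univ : Finset (Fin n)).powersetCard k, (n.choose k : ℝ) * (β * β) := by
        refine Finset.sum_le_sum fun X _ => ?_
        rw [Finset.sum_const, nsmul_eq_mul]
        refine mul_le_mul_of_nonneg_right ?_ (by positivity)
        have h1 : (((Finset.univ : Finset (Fin n)).powersetCard k).filter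
            (fun Y => Y ∩ X ≠ ∅)).card ≤ ((Finset.univ : Finset (Fin n)).powersetCard k).card :=
          Finset.card_filter_le _ _
        rw [Finset.card_powersetCard, Finset.card_univ, Fintype.card_fin] at h1
        exact_mod_cast h1
    _ = (n.choose k : ℝ) ^ 2 * ((t.choose s : ℝ) * q ^ (s * k)) ^ 2 := by
        rw [Finset.sum_const, nsmul_eq_mul, Finset.card_powersetCard,
          Finset.card_univ, Fintype.card_fin, ← hβ]
        ring

private lemma b2_le (A : Fin t → Fin n → Ω → Bool)
    (hindep : iIndepFun
      (fun p : Fin t × Fin n => A p.1 p.2) μ)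
    {q : ℝ} (hq0 : 0 ≤ q) (hq1 : q ≤ 1)
    (hq : ∀ j i, μ {ω | A j i ω = true} = ENNReal.ofReal q) (k s : ℕ) :
    b2 μ A k s ≤ ∑ i ∈ Finset.Icc 1 (k - 1), ∑ r ∈ Finset.Icc 0 s,
      (((n.choose k) * (2 ^ k * n ^ (k - i)) : ℕ) : ℝ) *
        ((((t.choose s) * (2 ^ s * t ^ (s - r)) : ℕ) : ℝ) * q ^ (2 * (s * k) - r * i)) := by
  classical
  set Pn := (Finset.univ : Finset (Fin n)).powersetCard k with hPn
  set Pt := (Finset.univ : Finset (Fin t)).powersetCard s with hPt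
  set J : ℕ → ℝ := fun i => ∑ r ∈ Finset.Icc 0 s,
    ((2 ^ s * t ^ (s - r) : ℕ) : ℝ) * q ^ (2 * (s * k) - r * i) with hJdef
  have hJ0 : ∀ i, 0 ≤ J i := fun i =>
    Finset.sum_nonneg fun r _ => by positivity
  set H : ℕ → ℝ := fun i => (t.choose s : ℝ) * J i with hHdef
  have hH0 : ∀ i, 0 ≤ H i := fun i => mul_nonneg (by positivity) (hJ0 i)
  have step1 : ∀ X Y : Finset (Fin n), X.card = k → Y.card = k →
      pXY μ A s X Y ≤ H ((X ∩ Y).card) := by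
    intro X Y hX hY
    refine (pXY_le A hindep hq0 hq hX hY s).trans ?_
    have hin : ∀ S ∈ Pt,
        (∑ T ∈ Pt, q ^ (2 * (s * k) - (S ∩ T).card * (X ∩ Y).card)) ≤ J ((X ∩ Y).card) := by
      intro S hS
      have hScard := (Finset.mem_powersetCard.1 hS).2
      have hcard : ∀ T ∈ Pt, T.card = s := fun T hT => (Finset.mem_powersetCard.1 hT).2
      have hImem : ∀ T ∈ Pt, (S ∩ T).card ∈ Finset.Icc 0 s := by
        intro T hT
        refine Finset.mem_Icc.2 ⟨Nat.zero_le _, ?_⟩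
        calc (S ∩ T).card ≤ S.card := Finset.card_le_card Finset.inter_subset_left
          _ = s := hScard
      have happ := sum_inter_card_le S s Pt hcard
        (fun r => q ^ (2 * (s * k) - r * (X ∩ Y).card)) (fun m => by positivity)
        (Finset.Icc 0 s) hImem
      rw [hScard] at happ
      refine happ.trans ?_
      rw [hJdef]
      refine le_of_eq (Finset.sum_congr rfl fun r _ => ?_)
      rw [Fintype.card_fin]
    calc ∑ S ∈ Pt, ∑ T ∈ Pt, q ^ (2 * (s * k) - (S ∩ T).card * (X ∩ Y).card)
        ≤ ∑ _S ∈ Pt, J ((X ∩ Y).card) := Finset.sum_le_sum hin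
      _ = (Pt.card : ℝ) * J ((X ∩ Y).card) := by rw [Finset.sum_const, nsmul_eq_mul]
      _ = H ((X ∩ Y).card) := by
          rw [hPt, Finset.card_powersetCard, Finset.card_univ, Fintype.card_fin, hHdef]
  have step2 : ∀ X ∈ Pn,
      ∑ Y ∈ Pn.filter (fun Y => Y ∩ X ≠ ∅ ∧ Y ≠ X), pXY μ A s X Y ≤
        ∑ i ∈ Finset.Icc 1 (k - 1), ((2 ^ k * n ^ (k - i) : ℕ) : ℝ) * H i := by
    intro X hX
    have hXk := (Finset.mem_powersetCard.1 hX).2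
    set B := Pn.filter (fun Y => Y ∩ X ≠ ∅ ∧ Y ≠ X) with hB
    have hBcard : ∀ Y ∈ B, Y.card = k := fun Y hY =>
      (Finset.mem_powersetCard.1 (Finset.mem_filter.1 hY).1).2
    have hImem : ∀ Y ∈ B, (X ∩ Y).card ∈ Finset.Icc 1 (k - 1) := by
      intro Y hY
      have hmf := Finset.mem_filter.1 hY
      have hYP := hmf.1
      have hne := hmf.2.1
      have hYX := hmf.2.2
      have hYk := (Finset.mem_powersetCard.1 hYP).2
      have hlow : 1 ≤ (X ∩ Y).card := by
        rw [Finset.inter_comm]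
        exact Finset.card_pos.2 (Finset.nonempty_iff_ne_empty.2 hne)
      have hup : (X ∩ Y).card ≤ k := by
        calc (X ∩ Y).card ≤ X.card := Finset.card_le_card Finset.inter_subset_left
          _ = k := hXk
      have hne2 : (X ∩ Y).card ≠ k := by
        intro hcontra
        have hsub : X ∩ Y ⊆ X := Finset.inter_subset_left
        have heq : X ∩ Y = X := Finset.eq_of_subset_of_card_le hsub (by omega)
        have hXY : X ⊆ Y := by
          rw [← heq]; exact Finset.inter_subset_right
        have : Y = X := (Finset.eq_of_subset_of_card_le hXY (by omega)).symm
        exact hYX this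
      exact Finset.mem_Icc.2 ⟨hlow, by omega⟩
    calc ∑ Y ∈ B, pXY μ A s X Y
        ≤ ∑ Y ∈ B, H ((X ∩ Y).card) :=
          Finset.sum_le_sum fun Y hY => step1 X Y hXk (hBcard Y hY)
      _ ≤ ∑ i ∈ Finset.Icc 1 (k - 1),
            ((2 ^ X.card * (Fintype.card (Fin n)) ^ (k - i) : ℕ) : ℝ) * H i :=
          sum_inter_card_le X k B hBcard H hH0 _ hImem
      _ = ∑ i ∈ Finset.Icc 1 (k - 1), ((2 ^ k * n ^ (k - i) : ℕ) : ℝ) * H i := by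
          refine Finset.sum_congr rfl fun i _ => ?_
          rw [hXk, Fintype.card_fin]
  calc b2 μ A k s
      ≤ ∑ _X ∈ Pn, ∑ i ∈ Finset.Icc 1 (k - 1), ((2 ^ k * n ^ (k - i) : ℕ) : ℝ) * H i :=
        Finset.sum_le_sum step2
    _ = (n.choose k : ℝ) *
        ∑ i ∈ Finset.Icc 1 (k - 1), ((2 ^ k * n ^ (k - i) : ℕ) : ℝ) * H i := by
        rw [Finset.sum_const, nsmul_eq_mul, hPn, Finset.card_powersetCard,
          Finset.card_univ, Fintype.card_fin]
    _ = ∑ i ∈ Finset.Icc 1 (k - 1), ∑ r ∈ Finset.Icc 0 s,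
          (((n.choose k) * (2 ^ k * n ^ (k - i)) : ℕ) : ℝ) *
            ((((t.choose s) * (2 ^ s * t ^ (s - r)) : ℕ) : ℝ) * q ^ (2 * (s * k) - r * i)) := by
        rw [Finset.mul_sum]
        refine Finset.sum_congr rfl fun i _ => ?_
        rw [hHdef, hJdef]
        simp only [Finset.mul_sum]
        refine Finset.sum_congr rfl fun r _ => ?_
        push_cast
        ring

end Helpers

/-- **`b₁(s) + b₂(s) = O(1/n^{2s−2})` in the fixed-`p` model.**
Fix `k, s ≥ 2`, `γ > 0` and `0 < c ≤ (k−1)(1−1/s)`; consider for each `n` the random dataset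
model with common item probability `p = γ/n` and `t(n) = O(n^c)` transactions. Then, as
`n → ∞`, `b₁(s) + b₂(s) = O(1/n^{2s−2})`. -/
theorem b1_add_b2_isBigO_fixed_p
    {k s : ℕ} (hk : 2 ≤ k) (hs : 2 ≤ s)
    (γ : ℝ) (hγ : 0 < γ)
    (c : ℝ) (hc0 : 0 < c) (hc : c ≤ ((k : ℝ) - 1) * (1 - 1 / (s : ℝ)))
    {Ω : ℕ → Type*} [∀ n, MeasurableSpace (Ω n)]
    (μ : ∀ n, Measure (Ω n)) [∀ n, IsProbabilityMeasure (μ n)]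
    (t : ℕ → ℕ)
    (htO : (fun n => (t n : ℝ)) =O[atTop] fun n => (n : ℝ) ^ c)
    (A : ∀ n, Fin (t n) → Fin n → Ω n → Bool)
    (hmeas : ∀ n j i, Measurable (A n j i))
    (hindep : ∀ n, iIndepFun
      (fun p : Fin (t n) × Fin n => A n p.1 p.2) (μ n))
    (hfreq : ∀ n : ℕ, γ ≤ n → ∀ j i,
      μ n {ω | A n j i ω = true} = ENNReal.ofReal (γ / n)) :
    (fun n => b1 (μ n) (A n) k s + b2 (μ n) (A n) k s)
      =O[atTop] fun n => 1 / (n : ℝ) ^ (2 * s - 2) := by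
  rw [isBigO_iff] at htO
  obtain ⟨C, hC⟩ := htO
  set C0 : ℝ := max C 1 with hC0def
  have hC0 : (1 : ℝ) ≤ C0 := le_max_right _ _
  set Mγ : ℝ := max 1 γ with hMγdef
  set K : ℝ := (1 + 2 ^ (k + s) * (k * (s + 1))) *
    (C0 ^ (2 * s) * Mγ ^ (2 * (s * k))) with hKdef
  rw [isBigO_iff]
  refine ⟨K, ?_⟩
  have hev1 : ∀ᶠ (n : ℕ) in atTop, 1 ≤ (n : ℝ) := by
    filter_upwards [eventually_ge_atTop 1] with n hn
    exact_mod_cast hn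
  have hev2 : ∀ᶠ (n : ℕ) in atTop, γ ≤ (n : ℝ) := by
    filter_upwards [eventually_ge_atTop ⌈γ⌉₊] with n hn
    calc γ ≤ (⌈γ⌉₊ : ℝ) := Nat.le_ceil γ
      _ ≤ n := by exact_mod_cast hn
  filter_upwards [hC, hev1, hev2] with n hCn hn1 hγn
  have hn0 : (0 : ℝ) < (n : ℝ) := lt_of_lt_of_le one_pos hn1
  set q : ℝ := γ / (n : ℝ) with hqdef
  have hq0 : 0 ≤ q := div_nonneg hγ.le hn0.le
  have hq1 : q ≤ 1 := div_le_one_of_le₀ hγn hn0.le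
  have hfreqn : ∀ j i, μ n {ω | A n j i ω = true} = ENNReal.ofReal q := hfreq n hγn
  have htt0 : (0 : ℝ) ≤ (t n : ℝ) := Nat.cast_nonneg _
  have hrp0 : (0 : ℝ) ≤ (n : ℝ) ^ c := Real.rpow_nonneg hn0.le c
  have htt : (t n : ℝ) ≤ C0 * (n : ℝ) ^ c := by
    have h1 : ‖(t n : ℝ)‖ = (t n : ℝ) := Real.norm_of_nonneg htt0
    have h2 : ‖((n : ℝ)) ^ c‖ = (n : ℝ) ^ c := Real.norm_of_nonneg hrp0
    calc (t n : ℝ) ≤ C * (n : ℝ) ^ c := by rw [← h1, ← h2]; exact hCn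
      _ ≤ C0 * (n : ℝ) ^ c :=
          mul_le_mul_of_nonneg_right (le_max_left _ _) hrp0
  set D : ℝ := C0 ^ (2 * s) * Mγ ^ (2 * (s * k)) * (n : ℝ) ^ ((2 : ℝ) - 2 * s) with hDdef
  have hD0 : 0 ≤ D := by
    rw [hDdef]
    have := Real.rpow_nonneg hn0.le ((2 : ℝ) - 2 * s)
    positivity
  have hbase : ∀ (i r : ℕ), i ≤ k - 1 → r ≤ s →
      (n : ℝ) ^ (2 * k - i) * (t n : ℝ) ^ (2 * s - r) * q ^ (2 * (s * k) - r * i) ≤ D :=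
    fun i r hik hr => term_le hk hs hc hC0 hγ hn1 hγn htt0 htt hik hr
  -- b1 bound
  have hb1 : b1 (μ n) (A n) k s ≤ D := by
    refine (b1_le (A n) (hindep n) hq0 hfreqn k s).trans ?_
    have h1 : (n.choose k : ℝ) ≤ (n : ℝ) ^ k := by exact_mod_cast Nat.choose_le_pow n k
    have h2 : ((t n).choose s : ℝ) ≤ (t n : ℝ) ^ s := by
      exact_mod_cast Nat.choose_le_pow (t n) s
    have hbase00 := hbase 0 0 (Nat.zero_le _) (Nat.zero_le _)
    simp only [Nat.sub_zero, Nat.mul_zero, Nat.zero_mul] at hbase00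
    calc (n.choose k : ℝ) ^ 2 * (((t n).choose s : ℝ) * q ^ (s * k)) ^ 2
        ≤ ((n : ℝ) ^ k) ^ 2 * ((t n : ℝ) ^ s * q ^ (s * k)) ^ 2 := by
          have hc1 : (0 : ℝ) ≤ (n.choose k : ℝ) := Nat.cast_nonneg _
          have hc2 : (0 : ℝ) ≤ ((t n).choose s : ℝ) := Nat.cast_nonneg _
          gcongr
      _ = (n : ℝ) ^ (2 * k) * (t n : ℝ) ^ (2 * s) * q ^ (2 * (s * k)) := by ring
      _ ≤ D := hbase00
  -- b2 bound
  have hb2 : b2 (μ n) (A n) k s ≤ (2 ^ (k + s) * (k * (s + 1)) : ℝ) * D := by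
    refine (b2_le (A n) (hindep n) hq0 hq1 hfreqn k s).trans ?_
    have hterm : ∀ i ∈ Finset.Icc 1 (k - 1), ∀ r ∈ Finset.Icc 0 s,
        (((n.choose k) * (2 ^ k * n ^ (k - i)) : ℕ) : ℝ) *
          (((((t n).choose s) * (2 ^ s * (t n) ^ (s - r)) : ℕ) : ℝ) *
            q ^ (2 * (s * k) - r * i)) ≤ (2 ^ (k + s) : ℝ) * D := by
      intro i hi r hr
      have hik : i ≤ k - 1 := (Finset.mem_Icc.1 hi).2
      have hrs : r ≤ s := (Finset.mem_Icc.1 hr).2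
      have hN1 : ((n.choose k) * (2 ^ k * n ^ (k - i)) : ℕ) ≤ 2 ^ k * n ^ (2 * k - i) := by
        have h1 : n.choose k ≤ n ^ k := Nat.choose_le_pow n k
        have h2 : n ^ k * n ^ (k - i) = n ^ (2 * k - i) := by
          rw [← pow_add]
          congr 1
          omega
        calc (n.choose k) * (2 ^ k * n ^ (k - i)) ≤ n ^ k * (2 ^ k * n ^ (k - i)) :=
              Nat.mul_le_mul_right _ h1
          _ = 2 ^ k * (n ^ k * n ^ (k - i)) := by ring
          _ = 2 ^ k * n ^ (2 * k - i) := by rw [h2]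
      have hN2 : (((t n).choose s) * (2 ^ s * (t n) ^ (s - r)) : ℕ) ≤
          2 ^ s * (t n) ^ (2 * s - r) := by
        have h1 : (t n).choose s ≤ (t n) ^ s := Nat.choose_le_pow (t n) s
        have h2 : (t n) ^ s * (t n) ^ (s - r) = (t n) ^ (2 * s - r) := by
          rw [← pow_add]
          congr 1
          omega
        calc ((t n).choose s) * (2 ^ s * (t n) ^ (s - r)) ≤
              (t n) ^ s * (2 ^ s * (t n) ^ (s - r)) := Nat.mul_le_mul_right _ h1
          _ = 2 ^ s * ((t n) ^ s * (t n) ^ (s - r)) := by ring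
          _ = 2 ^ s * (t n) ^ (2 * s - r) := by rw [h2]
      have hq' : (0 : ℝ) ≤ q ^ (2 * (s * k) - r * i) := by positivity
      calc (((n.choose k) * (2 ^ k * n ^ (k - i)) : ℕ) : ℝ) *
            (((((t n).choose s) * (2 ^ s * (t n) ^ (s - r)) : ℕ) : ℝ) *
              q ^ (2 * (s * k) - r * i))
          ≤ ((2 ^ k * n ^ (2 * k - i) : ℕ) : ℝ) *
            (((2 ^ s * (t n) ^ (2 * s - r) : ℕ) : ℝ) * q ^ (2 * (s * k) - r * i)) := by
            have hc1 : ((n.choose k * (2 ^ k * n ^ (k - i)) : ℕ) : ℝ) ≤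
                ((2 ^ k * n ^ (2 * k - i) : ℕ) : ℝ) := by exact_mod_cast hN1
            have hc2 : (((t n).choose s * (2 ^ s * (t n) ^ (s - r)) : ℕ) : ℝ) ≤
                ((2 ^ s * (t n) ^ (2 * s - r) : ℕ) : ℝ) := by exact_mod_cast hN2
            have h0a : (0 : ℝ) ≤ ((n.choose k * (2 ^ k * n ^ (k - i)) : ℕ) : ℝ) :=
              Nat.cast_nonneg _
            gcongr
          _ = (2 ^ (k + s) : ℝ) *
              ((n : ℝ) ^ (2 * k - i) * (t n : ℝ) ^ (2 * s - r) *
                q ^ (2 * (s * k) - r * i)) := by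
            push_cast
            ring
          _ ≤ (2 ^ (k + s) : ℝ) * D := by
            refine mul_le_mul_of_nonneg_left (hbase i r hik hrs) (by positivity)
    calc ∑ i ∈ Finset.Icc 1 (k - 1), ∑ r ∈ Finset.Icc 0 s,
          (((n.choose k) * (2 ^ k * n ^ (k - i)) : ℕ) : ℝ) *
            (((((t n).choose s) * (2 ^ s * (t n) ^ (s - r)) : ℕ) : ℝ) *
              q ^ (2 * (s * k) - r * i))
        ≤ ∑ _i ∈ Finset.Icc 1 (k - 1), ∑ _r ∈ Finset.Icc 0 s, (2 ^ (k + s) : ℝ) * D := by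
          refine Finset.sum_le_sum fun i hi => Finset.sum_le_sum fun r hr => ?_
          exact hterm i hi r hr
      _ = ((Finset.Icc 1 (k - 1)).card : ℝ) * (((Finset.Icc 0 s).card : ℝ) *
            ((2 ^ (k + s) : ℝ) * D)) := by
          rw [Finset.sum_const, Finset.sum_const, nsmul_eq_mul, nsmul_eq_mul]
      _ ≤ (2 ^ (k + s) * (k * (s + 1)) : ℝ) * D := by
          have hc1 : ((Finset.Icc 1 (k - 1)).card : ℝ) ≤ (k : ℝ) := by
            rw [Nat.card_Icc]
            exact_mod_cast (by omega : k - 1 + 1 - 1 ≤ k)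
          have hc2 : ((Finset.Icc 0 s).card : ℝ) = (s : ℝ) + 1 := by
            rw [Nat.card_Icc]
            push_cast [Nat.sub_zero]
            ring
          rw [hc2]
          have h2D : (0 : ℝ) ≤ (2 ^ (k + s) : ℝ) * D := by positivity
          calc ((Finset.Icc 1 (k - 1)).card : ℝ) * (((s : ℝ) + 1) * ((2 ^ (k + s) : ℝ) * D))
              ≤ (k : ℝ) * (((s : ℝ) + 1) * ((2 ^ (k + s) : ℝ) * D)) := by
                refine mul_le_mul_of_nonneg_right hc1 ?_
                positivity
            _ = (2 ^ (k + s) * (k * (s + 1)) : ℝ) * D := by ring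
  -- nonnegativity
  have hb1nn : 0 ≤ b1 (μ n) (A n) k s := by
    unfold b1
    exact Finset.sum_nonneg fun X _ => Finset.sum_nonneg fun Y _ =>
      mul_nonneg ENNReal.toReal_nonneg ENNReal.toReal_nonneg
  have hb2nn : 0 ≤ b2 (μ n) (A n) k s := by
    unfold b2
    exact Finset.sum_nonneg fun X _ => Finset.sum_nonneg fun Y _ => ENNReal.toReal_nonneg
  -- final
  have hpow : (n : ℝ) ^ ((2 : ℝ) - 2 * s) = 1 / (n : ℝ) ^ (2 * s - 2) := by
    have hcast : ((2 * s - 2 : ℕ) : ℝ) = 2 * (s : ℝ) - 2 := by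
      rw [Nat.cast_sub (by omega : 2 ≤ 2 * s)]
      push_cast
      ring
    rw [← Real.rpow_natCast (n : ℝ) (2 * s - 2), hcast, one_div, ← Real.rpow_neg hn0.le]
    congr 1
    ring
  have hKD : K * ((n : ℝ) ^ ((2 : ℝ) - 2 * s)) =
      D + (2 ^ (k + s) * (k * (s + 1)) : ℝ) * D := by
    rw [hKdef, hDdef]
    push_cast
    ring
  have hsum : b1 (μ n) (A n) k s + b2 (μ n) (A n) k s ≤ K * ((n : ℝ) ^ ((2 : ℝ) - 2 * s)) := by
    rw [hKD]
    linarith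
  rw [Real.norm_of_nonneg (by linarith : (0 : ℝ) ≤ b1 (μ n) (A n) k s + b2 (μ n) (A n) k s)]
  have hnorm : ‖1 / (n : ℝ) ^ (2 * s - 2)‖ = 1 / (n : ℝ) ^ (2 * s - 2) := by
    refine Real.norm_of_nonneg ?_
    positivity
  rw [hnorm, ← hpow]
  exact hsum

end PaperModel
end
end
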